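/- Every proper sequence $(a_n)$ in a semigroup has a sumsequence $(b_n)$ such that $b_F \neq b_G$ for all disjoint finite nonempty index sets $F$ and $G$. -/

import Mathlib

open Filter

/-- The ordered sum `a_{i_1} + ⋯ + a_{i_m}` over a finite index set
`F = {i_1 < ⋯ < i_m}` (junk value `a 0` if `F = ∅`). -/
def ordsum {S : Type*} [AddSemigroup S] (a : ℕ → S) (F : Finset ℕ) : S :=
  match F.sort (· ≤ ·) with
  | [] => a 0
  | i :: l => l.foldl (fun s j => s + a j) (a i)

/-- `F < G`: every element of `F` is smaller than every element of `G`. -/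
def FinsetLT (F G : Finset ℕ) : Prop := ∀ i ∈ F, ∀ j ∈ G, i < j

/-- `FS(a_1, a_2, …)`: the set of all finite ordered sums of the sequence `a`. -/
def FSset {S : Type*} [AddSemigroup S] (a : ℕ → S) : Set S :=
  {s | ∃ F : Finset ℕ, F.Nonempty ∧ ordsum a F = s}

/-- `FS(a_n, a_{n+1}, …)`: finite ordered sums with all indices `≥ n`. -/
def FStail {S : Type*} [AddSemigroup S] (a : ℕ → S) (n : ℕ) : Set S :=
  {s | ∃ F : Finset ℕ, F.Nonempty ∧ (∀ i ∈ F, n ≤ i) ∧ ordsum a F = s}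

/-- A sequence is proper if `a_{F₁} ≠ a_{F₂}` whenever `F₁ < F₂`. -/
def IsProperSeq {S : Type*} [AddSemigroup S] (a : ℕ → S) : Prop :=
  ∀ F G : Finset ℕ, F.Nonempty → G.Nonempty → FinsetLT F G →
    ordsum a F ≠ ordsum a G

/-- `b` is a sumsequence of `a`: `b_k = a_{F_k}` for finite index sets `F₁ < F₂ < ⋯`. -/
def IsSumseq {S : Type*} [AddSemigroup S] (a b : ℕ → S) : Prop :=
  ∃ F : ℕ → Finset ℕ, (∀ k, (F k).Nonempty) ∧
    (∀ k, FinsetLT (F k) (F (k + 1))) ∧ (∀ k, b k = ordsum a (F k))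

namespace Stmt9Aux

variable {S : Type*} [AddSemigroup S]

def listsum (a : ℕ → S) : List ℕ → S
  | [] => a 0
  | i :: l => l.foldl (fun s j => s + a j) (a i)

lemma ordsum_eq_listsum (a : ℕ → S) (F : Finset ℕ) :
    ordsum a F = listsum a (F.sort (· ≤ ·)) := by
  unfold ordsum listsum
  rcases F.sort (· ≤ ·) with _ | ⟨i, l⟩ <;> rfl

lemma foldl_assoc (a : ℕ → S) (l : List ℕ) : ∀ x y : S,
    l.foldl (fun s j => s + a j) (x + y) = x + l.foldl (fun s j => s + a j) y := by
  induction l with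
  | nil => intro x y; rfl
  | cons j l ih =>
    intro x y
    simp only [List.foldl_cons]
    rw [add_assoc]
    exact ih x (y + a j)

lemma listsum_append (a : ℕ → S) {l₁ l₂ : List ℕ} (h₁ : l₁ ≠ []) (h₂ : l₂ ≠ []) :
    listsum a (l₁ ++ l₂) = listsum a l₁ + listsum a l₂ := by
  match l₁, l₂ with
  | i :: t, j :: u =>
    show ((t ++ j :: u).foldl (fun s j => s + a j) (a i)) = _
    rw [List.foldl_append]
    show (u.foldl (fun s j => s + a j) (t.foldl (fun s j => s + a j) (a i) + a j)) = _
    rw [foldl_assoc]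
    rfl

lemma sort_nonnil {F : Finset ℕ} (h : F.Nonempty) : F.sort (· ≤ ·) ≠ [] := by
  intro hh
  have := Finset.length_sort (α := ℕ) (· ≤ ·) (s := F)
  rw [hh] at this
  simp only [List.length_nil] at this
  exact absurd (Finset.card_eq_zero.mp this.symm) (Finset.nonempty_iff_ne_empty.mp h)

lemma sort_union {F G : Finset ℕ} (h : FinsetLT F G) :
    (F ∪ G).sort (· ≤ ·) = F.sort (· ≤ ·) ++ G.sort (· ≤ ·) := by
  apply List.Perm.eq_of_pairwise' (Finset.pairwise_sort _ _) ?_ ?_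
  · rw [List.pairwise_append]
    refine ⟨Finset.pairwise_sort _ _, Finset.pairwise_sort _ _, ?_⟩
    intro x hx y hy
    exact le_of_lt (h x ((Finset.mem_sort _).mp hx) y ((Finset.mem_sort _).mp hy))
  · apply List.perm_of_nodup_nodup_toFinset_eq (Finset.sort_nodup _ _)
    · refine (Finset.sort_nodup _ _).append (Finset.sort_nodup _ _) ?_
      intro x hx hx'
      exact lt_irrefl x (h x ((Finset.mem_sort _).mp hx) x ((Finset.mem_sort _).mp hx'))
    · rw [List.toFinset_append, Finset.sort_toFinset, Finset.sort_toFinset,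
        Finset.sort_toFinset]

lemma ordsum_union (a : ℕ → S) {F G : Finset ℕ} (h : FinsetLT F G) (hF : F.Nonempty)
    (hG : G.Nonempty) : ordsum a (F ∪ G) = ordsum a F + ordsum a G := by
  rw [ordsum_eq_listsum, sort_union h, listsum_append a (sort_nonnil hF) (sort_nonnil hG),
    ← ordsum_eq_listsum, ← ordsum_eq_listsum]

lemma ordsum_singleton (a : ℕ → S) (n : ℕ) : ordsum a {n} = a n := by
  rw [ordsum_eq_listsum, Finset.sort_singleton]
  rfl

lemma foldl_congr {a b : ℕ → S} : ∀ (l : List ℕ) (x : S), (∀ i ∈ l, a i = b i) →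
    l.foldl (fun s j => s + a j) x = l.foldl (fun s j => s + b j) x := by
  intro l
  induction l with
  | nil => intro x _; rfl
  | cons j l ih =>
    intro x h
    simp only [List.foldl_cons]
    rw [h j List.mem_cons_self]
    exact ih _ fun i hi => h i (List.mem_cons_of_mem _ hi)

lemma biUnion_union' (s t : Finset ℕ) (f : ℕ → Finset ℕ) :
    (s ∪ t).biUnion f = s.biUnion f ∪ t.biUnion f := by
  ext x
  simp only [Finset.mem_biUnion, Finset.mem_union]
  constructor
  · rintro ⟨k, hk | hk, hx⟩
    · exact Or.inl ⟨k, hk, hx⟩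
    · exact Or.inr ⟨k, hk, hx⟩
  · rintro (⟨k, hk, hx⟩ | ⟨k, hk, hx⟩)
    · exact ⟨k, Or.inl hk, hx⟩
    · exact ⟨k, Or.inr hk, hx⟩

lemma ordsum_congr {a b : ℕ → S} {F : Finset ℕ} (hFne : F.Nonempty) (h : ∀ i ∈ F, a i = b i) :
    ordsum a F = ordsum b F := by
  rw [ordsum_eq_listsum, ordsum_eq_listsum]
  have h' : ∀ i ∈ F.sort (· ≤ ·), a i = b i := fun i hi => h i ((Finset.mem_sort _).mp hi)
  rcases hs : F.sort (· ≤ ·) with _ | ⟨i, l⟩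
  · exact absurd hs (sort_nonnil hFne)
  · rw [hs] at h'
    show (l.foldl (fun s j => s + a j) (a i)) = (l.foldl (fun s j => s + b j) (b i))
    rw [h' i List.mem_cons_self]
    exact foldl_congr l _ fun i hi => h' i (List.mem_cons_of_mem _ hi)

lemma erase_max'_union (F : Finset ℕ) (hF : F.Nonempty) :
    F.erase (F.max' hF) ∪ {F.max' hF} = F := by
  ext x
  simp only [Finset.mem_union, Finset.mem_erase, Finset.mem_singleton]
  constructor
  · rintro (⟨_, hx⟩ | rfl)
    · exact hx
    · exact F.max'_mem hF
  · intro hx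
    rcases eq_or_ne x (F.max' hF) with h | h
    · exact Or.inr h
    · exact Or.inl ⟨h, hx⟩

lemma finsetLT_erase_max' (F : Finset ℕ) (hF : F.Nonempty) :
    FinsetLT (F.erase (F.max' hF)) {F.max' hF} := by
  intro i hi j hj
  rw [Finset.mem_singleton] at hj
  subst hj
  exact lt_of_le_of_ne (F.le_max' i (Finset.mem_of_mem_erase hi)) (Finset.ne_of_mem_erase hi)

/-- Splitting off the largest index. -/
lemma ordsum_erase_max' (a : ℕ → S) (F : Finset ℕ) (hF : F.Nonempty)
    (hne : (F.erase (F.max' hF)).Nonempty) :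
    ordsum a F = ordsum a (F.erase (F.max' hF)) + a (F.max' hF) := by
  conv_lhs => rw [← erase_max'_union F hF]
  rw [ordsum_union a (finsetLT_erase_max' F hF) hne (Finset.singleton_nonempty _),
    ordsum_singleton]

lemma eq_singleton_max' (F : Finset ℕ) (hF : F.Nonempty)
    (h : F.erase (F.max' hF) = ∅) : F = {F.max' hF} := by
  conv_lhs => rw [← erase_max'_union F hF]
  rw [h, Finset.empty_union]

lemma ordsum_comp (a b : ℕ → S) (Blk : ℕ → Finset ℕ)
    (hne : ∀ k, (Blk k).Nonempty) (hlt : ∀ k l, k < l → FinsetLT (Blk k) (Blk l))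
    (hb : ∀ k, b k = ordsum a (Blk k)) :
    ∀ F : Finset ℕ, F.Nonempty → ordsum b F = ordsum a (F.biUnion Blk) := by
  intro F
  induction F using Finset.strongInduction with
  | _ F ih =>
    intro hF
    set M := F.max' hF with hM
    by_cases hFe : F.erase M = ∅
    · rw [eq_singleton_max' F hF hFe, ordsum_singleton, hb, Finset.singleton_biUnion]
    · have hFe' : (F.erase M).Nonempty := Finset.nonempty_iff_ne_empty.mpr hFe
      have hbi : ((F.erase M).biUnion Blk).Nonempty := by
        obtain ⟨k, hk⟩ := hFe'
        obtain ⟨i, hi⟩ := hne k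
        exact ⟨i, Finset.mem_biUnion.mpr ⟨k, hk, hi⟩⟩
      have hltbi : FinsetLT ((F.erase M).biUnion Blk) (Blk M) := by
        intro i hi j hj
        obtain ⟨k, hk, hik⟩ := Finset.mem_biUnion.mp hi
        exact hlt k M (finsetLT_erase_max' F hF k hk M (Finset.mem_singleton_self M)) i hik j hj
      rw [ordsum_erase_max' b F hF hFe', ih (F.erase M) (Finset.erase_ssubset (F.max'_mem hF)) hFe',
        hb, ← ordsum_union a hltbi hbi (hne M)]
      congr 1
      conv_rhs => rw [← erase_max'_union F hF]
      rw [biUnion_union', Finset.singleton_biUnion]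

lemma ordsum_absorb (b : ℕ → S) (habs : ∀ k l, k < l → b k + b l = b k) :
    ∀ F : Finset ℕ, ∀ hF : F.Nonempty, ordsum b F = b (F.min' hF) := by
  intro F
  induction F using Finset.strongInduction with
  | _ F ih =>
    intro hF
    set m := F.min' hF with hm
    by_cases hFe : F.erase m = ∅
    · have : F = {m} := by
        have h1 : F ⊆ {m} := by
          intro x hx
          rcases eq_or_ne x m with rfl | h
          · exact Finset.mem_singleton_self _
          · exact absurd (Finset.mem_erase.mpr ⟨h, hx⟩) (by rw [hFe]; simp)
        exact Finset.Subset.antisymm h1 (Finset.singleton_subset_iff.mpr (F.min'_mem hF))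
      rw [this] at hF ⊢
      rw [ordsum_singleton]
    · have hFe' : (F.erase m).Nonempty := Finset.nonempty_iff_ne_empty.mpr hFe
      have hsplit : {m} ∪ F.erase m = F := by
        ext x
        simp only [Finset.mem_union, Finset.mem_singleton, Finset.mem_erase]
        constructor
        · rintro (rfl | ⟨_, hx⟩)
          · exact F.min'_mem hF
          · exact hx
        · intro hx
          rcases eq_or_ne x m with rfl | h
          · exact Or.inl rfl
          · exact Or.inr ⟨h, hx⟩
      have hlt1 : FinsetLT {m} (F.erase m) := by
        intro i hi j hj
        rw [Finset.mem_singleton] at hi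
        subst hi
        exact Finset.min'_lt_of_mem_erase_min' F hF hj
      have h2 := ih (F.erase m) (Finset.erase_ssubset (F.min'_mem hF)) hFe'
      have hmin_lt : m < (F.erase m).min' hFe' :=
        Finset.min'_lt_of_mem_erase_min' F hF ((F.erase m).min'_mem hFe')
      conv_lhs => rw [← hsplit]
      rw [ordsum_union b hlt1 (Finset.singleton_nonempty _) hFe', ordsum_singleton, h2,
        habs _ _ hmin_lt]




attribute [local instance] Ultrafilter.add Ultrafilter.addSemigroup

open Filter



/-- An idempotent ultrafilter containing all tails `FS(a.drop n)`. -/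
theorem exists_idem_tails {M : Type*} [AddSemigroup M] (a : Stream' M) :
    ∃ U : Ultrafilter M, U + U = U ∧ ∀ n, ∀ᶠ m in (U : Filter M), m ∈ Hindman.FS (a.drop n) := by
  let S : Set (Ultrafilter M) := ⋂ n, { U | ∀ᶠ m in U, m ∈ Hindman.FS (a.drop n) }
  have h := exists_idempotent_in_compact_add_subsemigroup ?_ S ?_ ?_ ?_
  · rcases h with ⟨U, hU, U_idem⟩
    refine ⟨U, U_idem, fun n => ?_⟩
    exact Set.mem_iInter.mp hU n
  · exact Ultrafilter.continuous_add_left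
  · apply IsCompact.nonempty_iInter_of_sequence_nonempty_isCompact_isClosed
    · intro n U hU
      filter_upwards [hU]
      rw [← Stream'.drop_drop, ← Stream'.tail_eq_drop]
      exact fun m hm => Hindman.FS.tail _ m hm
    · intro n
      exact ⟨pure _, mem_pure.mpr <| Hindman.FS.head _⟩
    · exact (ultrafilter_isClosed_basic _).isCompact
    · intro n
      apply ultrafilter_isClosed_basic
  · exact IsClosed.isCompact (isClosed_iInter fun i => ultrafilter_isClosed_basic _)
  · intro U hU V hV
    rw [Set.mem_iInter] at *
    intro n
    rw [Set.mem_setOf_eq, Ultrafilter.eventually_add]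
    filter_upwards [hU n] with m hm
    obtain ⟨n', hn⟩ := Hindman.FS.add hm
    filter_upwards [hV (n + n')] with m' hm'
    apply hn
    simpa only [Stream'.drop_drop] using hm'

variable {S : Type*} [AddSemigroup S]

lemma mem_FStail_of_FS (a : ℕ → S) : ∀ {s : Stream' S} {m : S}, m ∈ Hindman.FS s →
    ∀ n, s = Stream'.drop n a → m ∈ FStail a n := by
  intro s m h
  induction h with
  | head' s =>
    intro n hn
    refine ⟨{n}, Finset.singleton_nonempty n, by simp, ?_⟩
    rw [ordsum_singleton, hn]
    exact (Stream'.head_drop (show Stream' S from a) n).symm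
  | tail' s m' h ih =>
    intro n hn
    obtain ⟨F, hFne, hFge, hFsum⟩ := ih (n + 1)
      (by rw [hn, Stream'.tail_eq_drop]; exact Stream'.drop_drop 1 n (show Stream' S from a))
    exact ⟨F, hFne, fun i hi => le_trans (Nat.le_succ n) (hFge i hi), hFsum⟩
  | cons' s m' h ih =>
    intro n hn
    obtain ⟨F, hFne, hFge, hFsum⟩ := ih (n + 1)
      (by rw [hn, Stream'.tail_eq_drop]; exact Stream'.drop_drop 1 n (show Stream' S from a))
    refine ⟨{n} ∪ F, (Finset.singleton_nonempty n).mono Finset.subset_union_left, ?_, ?_⟩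
    · intro i hi
      rcases Finset.mem_union.mp hi with hi | hi
      · rw [Finset.mem_singleton] at hi; omega
      · exact le_trans (Nat.le_succ n) (hFge i hi)
    · have hlt : FinsetLT {n} F := by
        intro i hi j hj
        rw [Finset.mem_singleton] at hi
        have := hFge j hj
        omega
      rw [ordsum_union a hlt (Finset.singleton_nonempty n) hFne, ordsum_singleton, hFsum,
        hn]
      exact congrArg (· + m') (Stream'.head_drop (show Stream' S from a) n).symm

section Idem

variable {U : Ultrafilter S}

lemma eventually_idem (hU : U + U = U) {p : S → Prop} (hp : ∀ᶠ x in (U : Filter S), p x) :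
    ∀ᶠ x in (U : Filter S), ∀ᶠ y in (U : Filter S), p (x + y) := by
  have : ∀ᶠ m in ((U + U : Ultrafilter S) : Filter S), p m := by rw [hU]; exact hp
  exact (Ultrafilter.eventually_add U U p).mp this

/-- The star set of the Galvin–Glazer argument. -/
def starSet (U : Ultrafilter S) (A : Set S) : Set S :=
  {x | x ∈ A ∧ ∀ᶠ y in (U : Filter S), x + y ∈ A}

lemma starSet_subset {A : Set S} : starSet U A ⊆ A := fun _ hx => hx.1

lemma starSet_mem (hU : U + U = U) {A : Set S} (hA : A ∈ U) : starSet U A ∈ U := by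
  have h1 : ∀ᶠ x in (U : Filter S), x ∈ A := hA
  have h2 := eventually_idem hU h1
  exact (h1.and h2 : _)

lemma starSet_step (hU : U + U = U) {A : Set S} {x : S} (hx : x ∈ starSet U A) :
    ∀ᶠ y in (U : Filter S), x + y ∈ starSet U A := by
  have h1 : ∀ᶠ y in (U : Filter S), x + y ∈ A := hx.2
  have h2 := eventually_idem hU h1
  filter_upwards [h1, h2] with y hy hz
  exact ⟨hy, hz.mono fun z hz' => by rwa [← add_assoc] at hz'⟩

lemma absorb_of_shift (hU : U + U = U) {t s : S} (h : ∀ᶠ x in (U : Filter S), t + x = s) :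
    ∀ᶠ y in (U : Filter S), s + y = s := by
  have h2 := eventually_idem hU h
  obtain ⟨x, hx1, hx2⟩ := (h.and h2).exists
  refine hx2.mono fun y hy => ?_
  rwa [← add_assoc, hx1] at hy

end Idem



section SeqChoice

variable {α : Type*} [Inhabited α]

open Classical in
noncomputable def pickFn (Q : (ℕ → α) → ℕ → Prop) (g : ℕ → α) (n : ℕ) : α :=
  if hc : ∃ x, Q (Function.update g n x) n then hc.choose else default

noncomputable def histFn (Q : (ℕ → α) → ℕ → Prop) : ℕ → ℕ → α
  | 0 => fun _ => default
  | n + 1 => Function.update (histFn Q n) n (pickFn Q (histFn Q n) n)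

theorem seq_choice (Q : (ℕ → α) → ℕ → Prop)
    (hQ : ∀ f g n, (∀ k, k ≤ n → f k = g k) → Q f n → Q g n)
    (hex : ∀ f n, (∀ k, k < n → Q f k) → ∃ x, Q (Function.update f n x) n) :
    ∃ f : ℕ → α, ∀ n, Q f n := by
  set f : ℕ → α := fun n => histFn Q (n + 1) n with hf
  have agree : ∀ n k, k < n → histFn Q n k = f k := by
    intro n
    induction n with
    | zero => intro k hk; exact absurd hk (Nat.not_lt_zero k)
    | succ n ih =>
      intro k hk
      rcases Nat.lt_succ_iff_lt_or_eq.mp hk with h | rfl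
      · show Function.update (histFn Q n) n (pickFn Q (histFn Q n) n) k = f k
        rw [Function.update_of_ne (Nat.ne_of_lt h)]
        exact ih k h
      · rfl
  have main : ∀ n, Q f n := by
    intro n
    induction n using Nat.strong_induction_on with
    | _ n ih =>
      have hprev : ∀ k, k < n → Q (histFn Q n) k := fun k hk =>
        hQ f _ k (fun j hj => (agree n j (lt_of_le_of_lt hj hk)).symm) (ih k hk)
      have hc : ∃ x, Q (Function.update (histFn Q n) n x) n := hex _ n hprev
      have hpick : Q (Function.update (histFn Q n) n (pickFn Q (histFn Q n) n)) n := by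
        unfold pickFn
        rw [dif_pos hc]
        exact hc.choose_spec
      have heq : Function.update (histFn Q n) n (pickFn Q (histFn Q n) n) = histFn Q (n + 1) :=
        rfl
      rw [heq] at hpick
      exact hQ _ f n (fun k hk => agree (n + 1) k (Nat.lt_succ_of_le hk)) hpick
  exact ⟨f, main⟩

end SeqChoice

lemma erase_top_union_singleton {G : Finset ℕ} {n : ℕ} (hnG : n ∈ G) :
    G.erase n ∪ {n} = G := by
  ext x
  simp only [Finset.mem_union, Finset.mem_erase, Finset.mem_singleton]
  constructor
  · rintro (⟨_, hx⟩ | rfl)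
    · exact hx
    · exact hnG
  · intro hx
    rcases eq_or_ne x n with h | h
    · exact Or.inr h
    · exact Or.inl ⟨h, hx⟩

lemma eq_singleton_of_erase_eq_empty {G : Finset ℕ} {n : ℕ} (hnG : n ∈ G)
    (h : G.erase n = ∅) : G = {n} := by
  conv_lhs => rw [← erase_top_union_singleton hnG]
  rw [h, Finset.empty_union]

lemma ordsum_erase_top (b : ℕ → S) {G : Finset ℕ} {n : ℕ} (hnG : n ∈ G)
    (hle : ∀ i ∈ G, i ≤ n) (hne : (G.erase n).Nonempty) :
    ordsum b G = ordsum b (G.erase n) + b n := by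
  have hlt : FinsetLT (G.erase n) {n} := by
    intro i hi j hj
    rw [Finset.mem_singleton] at hj
    subst hj
    have h1 := hle i (Finset.mem_of_mem_erase hi)
    have h2 := Finset.ne_of_mem_erase hi
    omega
  conv_lhs => rw [← erase_top_union_singleton hnG]
  rw [ordsum_union b hlt hne (Finset.singleton_nonempty _), ordsum_singleton]

/-- The set of elements absorbing `U`-many elements on the right. -/
def Eset (U : Ultrafilter S) : Set S := {x | ∀ᶠ y in (U : Filter S), x + y = x}

theorem case_absorbing (a : ℕ → S) (ha : IsProperSeq a) (U : Ultrafilter S)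
    (hTail : ∀ n, FStail a n ∈ U) (hE : Eset U ∈ U) :
    ∃ b : ℕ → S, IsSumseq a b ∧ ∀ F G : Finset ℕ, F.Nonempty → G.Nonempty → Disjoint F G →
      ordsum b F ≠ ordsum b G := by
  letI : Inhabited (S × Finset ℕ) := ⟨(a 0, ∅)⟩
  set Q : (ℕ → S × Finset ℕ) → ℕ → Prop := fun f n =>
    ((f n).2).Nonempty ∧
    (∀ k, k < n → FinsetLT (f k).2 (f n).2) ∧
    ((f n).1 = ordsum a (f n).2) ∧
    ((f n).1 ∈ Eset U) ∧
    (∀ k, k < n → (f k).1 + (f n).1 = (f k).1) with hQdef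
  have hQtrans : ∀ f g n, (∀ k, k ≤ n → f k = g k) → Q f n → Q g n := by
    intro f g n hfg hQfn
    obtain ⟨h1, h2, h3, h4, h5⟩ := hQfn
    rw [hfg n (le_refl n)] at h1 h2 h3 h4 h5
    refine ⟨h1, fun k hk => by rw [← hfg k (le_of_lt hk)]; exact h2 k hk, h3, h4,
      fun k hk => by rw [← hfg k (le_of_lt hk)]; exact h5 k hk⟩
  have hstep : ∀ f n, (∀ k, k < n → Q f k) → ∃ x, Q (Function.update f n x) n := by
    intro f n hprev
    set M : ℕ := ((Finset.range n).biUnion fun k => (f k).2).sup id + 1 with hM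
    have hW : (Eset U ∩ ((⋂ k ∈ Finset.range n, {y | (f k).1 + y = (f k).1}) ∩ FStail a M))
        ∈ U := by
      refine Filter.inter_mem hE (Filter.inter_mem ?_ (hTail M))
      rw [Filter.biInter_finset_mem]
      intro k hk
      exact (hprev k (Finset.mem_range.mp hk)).2.2.2.1
    obtain ⟨x, hxE, hxabs, hxtail⟩ := Ultrafilter.nonempty_of_mem hW
    obtain ⟨B, hBne, hBge, hBsum⟩ := hxtail
    refine ⟨(x, B), ?_, ?_, ?_, ?_, ?_⟩ <;>
      simp only [Function.update_self]
    · exact hBne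
    · intro k hk i hi j hj
      rw [Function.update_of_ne (Nat.ne_of_lt hk)] at hi
      have h1 : i ≤ ((Finset.range n).biUnion fun k => (f k).2).sup id :=
        Finset.le_sup (f := id) (Finset.mem_biUnion.mpr ⟨k, Finset.mem_range.mpr hk, hi⟩)
      have h2 := hBge j hj
      omega
    · exact hBsum.symm
    · exact hxE
    · intro k hk
      rw [Function.update_of_ne (Nat.ne_of_lt hk)]
      exact Set.mem_iInter₂.mp hxabs k (Finset.mem_range.mpr hk)
  obtain ⟨f, hQf⟩ := seq_choice Q hQtrans hstep
  · set b : ℕ → S := fun k => (f k).1 with hbdef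
    set Blk : ℕ → Finset ℕ := fun k => (f k).2 with hBdef
    have hne : ∀ k, (Blk k).Nonempty := fun k => (hQf k).1
    have hlt : ∀ k l, k < l → FinsetLT (Blk k) (Blk l) := fun k l h => (hQf l).2.1 k h
    have hb : ∀ k, b k = ordsum a (Blk k) := fun k => (hQf k).2.2.1
    have habs : ∀ k l, k < l → b k + b l = b k := fun k l h => (hQf l).2.2.2.2 k h
    refine ⟨b, ⟨Blk, hne, fun k => hlt k (k + 1) (Nat.lt_succ_self k), hb⟩, ?_⟩
    intro F G hF hG hdisj heq
    rw [ordsum_absorb b habs F hF, ordsum_absorb b habs G hG] at heq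
    have hne' : F.min' hF ≠ G.min' hG := by
      intro h
      exact Finset.disjoint_left.mp hdisj (F.min'_mem hF) (h ▸ G.min'_mem hG)
    rcases lt_or_gt_of_ne hne' with h | h
    · exact ha (Blk (F.min' hF)) (Blk (G.min' hG)) (hne _) (hne _) (hlt _ _ h)
        (by rw [← hb, ← hb]; exact heq)
    · exact ha (Blk (G.min' hG)) (Blk (F.min' hF)) (hne _) (hne _) (hlt _ _ h)
        (by rw [← hb, ← hb]; exact heq.symm)

theorem case_nonabsorbing (a : ℕ → S) (ha : IsProperSeq a) (U : Ultrafilter S) (hU : U + U = U)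
    (hTail : ∀ n, FStail a n ∈ U) (hE : (Eset U)ᶜ ∈ U) :
    ∃ b : ℕ → S, IsSumseq a b ∧ ∀ F G : Finset ℕ, F.Nonempty → G.Nonempty → Disjoint F G →
      ordsum b F ≠ ordsum b G := by
  classical
  letI : Inhabited (S × Finset ℕ) := ⟨(a 0, ∅)⟩
  set A : Set S := starSet U ((Eset U)ᶜ) with hAdef
  have hA : A ∈ U := starSet_mem hU hE
  set Q : (ℕ → S × Finset ℕ) → ℕ → Prop := fun f n =>
    ((f n).2).Nonempty ∧
    (∀ k, k < n → FinsetLT (f k).2 (f n).2) ∧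
    ((f n).1 = ordsum a (f n).2) ∧
    (∀ F : Finset ℕ, F ⊆ Finset.range (n + 1) → F.Nonempty →
      ordsum (fun k => (f k).1) F ∈ A) ∧
    (∀ F₁ F₂ : Finset ℕ, F₁ ⊆ Finset.range n → F₂ ⊆ Finset.range n → F₁.Nonempty →
      F₂.Nonempty → ordsum (fun k => (f k).1) F₂ + (f n).1 ≠ ordsum (fun k => (f k).1) F₁)
    with hQdef
  have hQtrans : ∀ f g n, (∀ k, k ≤ n → f k = g k) → Q f n → Q g n := by
    intro f g n hfg hQfn
    obtain ⟨h1, h2, h3, h4, h5⟩ := hQfn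
    have hcon : ∀ F : Finset ℕ, F ⊆ Finset.range (n + 1) → F.Nonempty →
        ordsum (fun k => (g k).1) F = ordsum (fun k => (f k).1) F := by
      intro F hFsub hFne
      exact ordsum_congr hFne fun i hi => by
        rw [hfg i (Nat.lt_succ_iff.mp (Finset.mem_range.mp (hFsub hi)))]
    refine ⟨?_, ?_, ?_, ?_, ?_⟩
    · rw [← hfg n (le_refl n)]; exact h1
    · intro k hk
      rw [← hfg n (le_refl n), ← hfg k (le_of_lt hk)]
      exact h2 k hk
    · rw [← hfg n (le_refl n)]; exact h3
    · intro F hFsub hFne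
      rw [hcon F hFsub hFne]
      exact h4 F hFsub hFne
    · intro F₁ F₂ h₁ h₂ hn₁ hn₂
      have hsub : ∀ F : Finset ℕ, F ⊆ Finset.range n → F ⊆ Finset.range (n + 1) :=
        fun F hF => hF.trans (Finset.range_subset_range.mpr (Nat.le_succ n))
      rw [hcon F₁ (hsub F₁ h₁) hn₁, hcon F₂ (hsub F₂ h₂) hn₂, ← hfg n (le_refl n)]
      exact h5 F₁ F₂ h₁ h₂ hn₁ hn₂
  have hstep : ∀ f n, (∀ k, k < n → Q f k) → ∃ x, Q (Function.update f n x) n := by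
    intro f n hprev
    set bf : ℕ → S := fun k => (f k).1 with hbf
    have hsums : ∀ F : Finset ℕ, F ⊆ Finset.range n → F.Nonempty → ordsum bf F ∈ A := by
      intro F hFsub hFne
      rcases n with _ | m
      · rw [Finset.range_zero, Finset.subset_empty] at hFsub
        exact absurd hFsub (Finset.nonempty_iff_ne_empty.mp hFne)
      · exact (hprev m (Nat.lt_succ_self m)).2.2.2.1 F hFsub hFne
    set M : ℕ := ((Finset.range n).biUnion fun k => (f k).2).sup id + 1 with hM
    set P : Finset (Finset ℕ) := (Finset.range n).powerset.filter (fun F => F.Nonempty)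
      with hP
    have hPmem : ∀ F ∈ P, F ⊆ Finset.range n ∧ F.Nonempty := by
      intro F hF
      rw [hP, Finset.mem_filter, Finset.mem_powerset] at hF
      exact hF
    have hW : (A ∩ ((⋂ F ∈ P, {y | ordsum bf F + y ∈ A}) ∩
        ((⋂ p ∈ P ×ˢ P, {y | ordsum bf p.2 + y ≠ ordsum bf p.1}) ∩ FStail a M))) ∈ U := by
      refine Filter.inter_mem hA (Filter.inter_mem ?_ (Filter.inter_mem ?_ (hTail M)))
      · rw [Filter.biInter_finset_mem]
        intro F hF
        exact starSet_step hU (hsums F (hPmem F hF).1 (hPmem F hF).2)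
      · rw [Filter.biInter_finset_mem]
        intro p hp
        rw [Finset.mem_product] at hp
        by_contra hcon
        have hcompl : {y | ordsum bf p.2 + y ≠ ordsum bf p.1}ᶜ ∈ U :=
          Ultrafilter.compl_mem_iff_notMem.mpr hcon
        have hkey : ∀ᶠ y in (U : Filter S), ordsum bf p.2 + y = ordsum bf p.1 := by
          have : {y | ordsum bf p.2 + y ≠ ordsum bf p.1}ᶜ =
              {y | ordsum bf p.2 + y = ordsum bf p.1} := by
            ext y; simp [not_not]
          rwa [this] at hcompl
        have habs : ordsum bf p.1 ∈ Eset U := absorb_of_shift hU hkey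
        exact (hsums p.1 (hPmem p.1 hp.1).1 (hPmem p.1 hp.1).2).1 habs
    obtain ⟨x, hxA, hxstar, hxpair, hxtail⟩ := Ultrafilter.nonempty_of_mem hW
    obtain ⟨B, hBne, hBge, hBsum⟩ := hxtail
    have hxstar' : ∀ F ∈ P, ordsum bf F + x ∈ A := fun F hF => Set.mem_iInter₂.mp hxstar F hF
    have hxpair' : ∀ p ∈ P ×ˢ P, ordsum bf p.2 + x ≠ ordsum bf p.1 :=
      fun p hp => Set.mem_iInter₂.mp hxpair p hp
    have hf'lt : ∀ k, k < n → Function.update f n (x, B) k = f k := fun k hk =>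
      Function.update_of_ne (Nat.ne_of_lt hk) _ _
    have hf'n : Function.update f n (x, B) n = (x, B) := Function.update_self _ _ _
    have hcon : ∀ F : Finset ℕ, F ⊆ Finset.range n → F.Nonempty →
        ordsum (fun k => ((Function.update f n (x, B)) k).1) F = ordsum bf F := by
      intro F hFsub hFne
      exact ordsum_congr hFne fun i hi => by
        rw [hf'lt i (Finset.mem_range.mp (hFsub hi))]
    refine ⟨(x, B), ?_, ?_, ?_, ?_, ?_⟩
    · rw [hf'n]; exact hBne
    · intro k hk i hi j hj
      rw [hf'lt k hk] at hi
      rw [hf'n] at hj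
      have h1 : i ≤ ((Finset.range n).biUnion fun k => (f k).2).sup id :=
        Finset.le_sup (f := id) (Finset.mem_biUnion.mpr ⟨k, Finset.mem_range.mpr hk, hi⟩)
      have h2 := hBge j hj
      omega
    · rw [hf'n]; exact hBsum.symm
    · -- all new sums lie in A
      intro F hFsub hFne
      by_cases hnF : n ∈ F
      · by_cases hFe : F.erase n = ∅
        · rw [eq_singleton_of_erase_eq_empty hnF hFe, ordsum_singleton, hf'n]
          exact hxA
        · have hFe' : (F.erase n).Nonempty := Finset.nonempty_iff_ne_empty.mpr hFe
          have hle : ∀ i ∈ F, i ≤ n := fun i hi =>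
            Nat.lt_succ_iff.mp (Finset.mem_range.mp (hFsub hi))
          have hsubE : F.erase n ⊆ Finset.range n := by
            intro i hi
            have h1 := hle i (Finset.mem_of_mem_erase hi)
            have h2 := Finset.ne_of_mem_erase hi
            rw [Finset.mem_range]
            omega
          rw [ordsum_erase_top (fun k => ((Function.update f n (x, B)) k).1) hnF hle hFe',
            hcon _ hsubE hFe', hf'n]
          refine hxstar' _ ?_
          rw [hP, Finset.mem_filter, Finset.mem_powerset]
          exact ⟨hsubE, hFe'⟩
      · have hsubF : F ⊆ Finset.range n := by
          intro i hi
          have h1 := Nat.lt_succ_iff.mp (Finset.mem_range.mp (hFsub hi))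
          have h2 : i ≠ n := fun h => hnF (h ▸ hi)
          rw [Finset.mem_range]
          omega
        rw [hcon F hsubF hFne]
        exact hsums F hsubF hFne
    · intro F₁ F₂ h₁ h₂ hn₁ hn₂
      rw [hcon F₁ h₁ hn₁, hcon F₂ h₂ hn₂, hf'n]
      refine hxpair' (F₁, F₂) ?_
      rw [Finset.mem_product]
      constructor <;> (rw [hP, Finset.mem_filter, Finset.mem_powerset])
      · exact ⟨h₁, hn₁⟩
      · exact ⟨h₂, hn₂⟩
  obtain ⟨f, hQf⟩ := seq_choice Q hQtrans hstep
  set b : ℕ → S := fun k => (f k).1 with hbdef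
  set Blk : ℕ → Finset ℕ := fun k => (f k).2 with hBdef
  have hne : ∀ k, (Blk k).Nonempty := fun k => (hQf k).1
  have hlt : ∀ k l, k < l → FinsetLT (Blk k) (Blk l) := fun k l h => (hQf l).2.1 k h
  have hb : ∀ k, b k = ordsum a (Blk k) := fun k => (hQf k).2.2.1
  have hstep' : ∀ (n : ℕ) (F₁ F₂ : Finset ℕ), F₁ ⊆ Finset.range n → F₂ ⊆ Finset.range n →
      F₁.Nonempty → F₂.Nonempty → ordsum b F₂ + b n ≠ ordsum b F₁ :=
    fun n F₁ F₂ h₁ h₂ hn₁ hn₂ => (hQf n).2.2.2.2 F₁ F₂ h₁ h₂ hn₁ hn₂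
  refine ⟨b, ⟨Blk, hne, fun k => hlt k (k + 1) (Nat.lt_succ_self k), hb⟩, ?_⟩
  have inner : ∀ (n : ℕ) (F G : Finset ℕ), F.Nonempty → G.Nonempty → Disjoint F G →
      n ∈ G → (∀ i ∈ F, i < n) → (∀ i ∈ G, i ≤ n) → ordsum b F ≠ ordsum b G := by
    intro n F G hF hG hdisj hnG hFlt hGle heq
    by_cases hG' : G.erase n = ∅
    · rw [eq_singleton_of_erase_eq_empty hnG hG', ordsum_singleton] at heq
      have h1 : ordsum b F = ordsum a (F.biUnion Blk) := ordsum_comp a b Blk hne hlt hb F hF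
      have hbi : (F.biUnion Blk).Nonempty := by
        obtain ⟨k, hk⟩ := hF
        obtain ⟨i, hi⟩ := hne k
        exact ⟨i, Finset.mem_biUnion.mpr ⟨k, hk, hi⟩⟩
      refine ha (F.biUnion Blk) (Blk n) hbi (hne n) ?_ ?_
      · intro i hi j hj
        obtain ⟨k, hk, hik⟩ := Finset.mem_biUnion.mp hi
        exact hlt k n (hFlt k hk) i hik j hj
      · rw [← h1, heq, hb n]
    · have hG'ne : (G.erase n).Nonempty := Finset.nonempty_iff_ne_empty.mpr hG'
      have hsplit := ordsum_erase_top b hnG hGle hG'ne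
      have hsubF : F ⊆ Finset.range n := fun i hi => Finset.mem_range.mpr (hFlt i hi)
      have hsubG : G.erase n ⊆ Finset.range n := by
        intro i hi
        have h1 := hGle i (Finset.mem_of_mem_erase hi)
        have h2 := Finset.ne_of_mem_erase hi
        rw [Finset.mem_range]
        omega
      exact hstep' n F (G.erase n) hsubF hsubG hF hG'ne (by rw [← hsplit, ← heq])
  intro F G hF hG hdisj
  have hFG : (F ∪ G).Nonempty := hF.mono Finset.subset_union_left
  set n := (F ∪ G).max' hFG with hn
  have hle : ∀ i ∈ F ∪ G, i ≤ n := fun i hi => Finset.le_max' _ i hi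
  rcases Finset.mem_union.mp ((F ∪ G).max'_mem hFG) with hmem | hmem
  · refine (inner n G F hG hF hdisj.symm hmem ?_ ?_).symm
    · intro i hi
      have h1 := hle i (Finset.mem_union_right F hi)
      have h2 : i ≠ n := by
        intro h
        apply Finset.disjoint_left.mp hdisj hmem
        rwa [h] at hi
      omega
    · intro i hi
      exact hle i (Finset.mem_union_left G hi)
  · refine inner n F G hF hG hdisj hmem ?_ ?_
    · intro i hi
      have h1 := hle i (Finset.mem_union_left G hi)
      have h2 : i ≠ n := by
        intro h
        refine Finset.disjoint_left.mp hdisj ?_ hmem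
        rwa [h] at hi
      omega
    · intro i hi
      exact hle i (Finset.mem_union_right F hi)

end Stmt9Aux

theorem stmt9 {S : Type*} [AddSemigroup S] (a : ℕ → S) (ha : IsProperSeq a) :
    ∃ b : ℕ → S, IsSumseq a b ∧
      ∀ F G : Finset ℕ, F.Nonempty → G.Nonempty → Disjoint F G →
        ordsum b F ≠ ordsum b G := by
  obtain ⟨U, hU, hFS⟩ := Stmt9Aux.exists_idem_tails (show Stream' S from a)
  have hTail : ∀ n, FStail a n ∈ U := by
    intro n
    refine Filter.mem_of_superset (hFS n) ?_
    intro m hm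
    exact Stmt9Aux.mem_FStail_of_FS a hm n rfl
  by_cases hE : Stmt9Aux.Eset U ∈ U
  · exact Stmt9Aux.case_absorbing a ha U hTail hE
  · exact Stmt9Aux.case_nonabsorbing a ha U hU hTail (Ultrafilter.compl_mem_iff_notMem.mpr hE)
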